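/- Let b : α → Fin m be a bucket function and let l be a list over α that is sorted by bucket, i.e., for all positions p ≤ q < l.length, b(l[p]) ≤ b(l[q]). For each i, let n_i be the number of elements of l with bucket i, and let c⁺_i, c⁻_i be integers with c⁻_i ≤ n_i ≤ c⁺_i. Define hi_i = min(l.length, ∑_{k ≤ i} c⁺_k) and lo_i = ∑_{k < i} max(0, c⁻_k). Then for every position j < l.length, if b(l[j]) = i then lo_i ≤ j and j < hi_i; that is, every element of bucket i lies inside the index interval [lo_i, hi_i). -/

import Mathlib

lemma filter_bucket_sum {α : Type*} {m : ℕ} (b : α → Fin m) (s : Finset (Fin m))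
    (l : List α) :
    (l.filter (fun a => b a ∈ s)).length = ∑ k ∈ s, (l.filter (fun a => b a = k)).length := by
  induction l with
  | nil => simp
  | cons a l ih =>
    simp only [List.filter_cons, apply_ite List.length, List.length_cons, ih]
    have key : ∀ x : Fin m,
        (if decide (b a = x) = true then (List.filter (fun a => decide (b a = x)) l).length + 1
          else (List.filter (fun a => decide (b a = x)) l).length)
        = (if b a = x then 1 else 0) + (List.filter (fun a => decide (b a = x)) l).length := by
      intro x
      by_cases hx : b a = x <;> simp [hx, add_comm]
    simp only [key, Finset.sum_add_distrib, Finset.sum_ite_eq']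
    by_cases h : b a ∈ s <;> simp [h, add_comm, ih]

/-- **Lossless index lookup on a bucket-sorted list.**
If `l` is sorted by the bucket function `b`, `n i` is the number of elements
of bucket `i`, and `c⁻ i ≤ n i ≤ c⁺ i`, then with
`hi i = min (|l|, ∑_{k ≤ i} c⁺ k)` and `lo i = ∑_{k < i} max (0, c⁻ k)`,
every position `j` whose element has bucket `i` satisfies
`lo i ≤ j < hi i`. -/
theorem special_index_lookup_lossless
    {α : Type*} (m : ℕ) (b : α → Fin m) (l : List α)
    (hsorted : ∀ (p q : ℕ) (hp : p < l.length) (hq : q < l.length), p ≤ q →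
      b (l.get ⟨p, hp⟩) ≤ b (l.get ⟨q, hq⟩))
    (n : Fin m → ℕ)
    (hn : ∀ i, n i = (l.filter (fun a => b a = i)).length)
    (cp cm : Fin m → ℤ)
    (hbound : ∀ i, cm i ≤ (n i : ℤ) ∧ (n i : ℤ) ≤ cp i)
    (hi lo : Fin m → ℤ)
    (hhi : ∀ i, hi i = min (l.length : ℤ) (∑ k ∈ Finset.Iic i, cp k))
    (hlo : ∀ i, lo i = ∑ k ∈ Finset.Iio i, max 0 (cm k)) :
    ∀ (j : ℕ) (hj : j < l.length) (i : Fin m),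
      b (l.get ⟨j, hj⟩) = i → lo i ≤ (j : ℤ) ∧ (j : ℤ) < hi i := by
  intro j hj i hbi
  -- count of elements with bucket < i
  have hlt : (l.filter (fun a => b a ∈ Finset.Iio i)).length ≤ j := by
    have hdrop : (l.drop j).filter (fun a => b a ∈ Finset.Iio i) = [] := by
      rw [List.filter_eq_nil_iff]
      intro a ha
      rw [List.mem_iff_getElem] at ha
      obtain ⟨p, hp, rfl⟩ := ha
      have hp' : j + p < l.length := by
        have := hp; rw [List.length_drop] at this; omega
      rw [List.getElem_drop]
      have := hsorted j (j + p) hj hp' (Nat.le_add_right _ _)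
      rw [hbi] at this
      simp only [Finset.mem_Iio, decide_eq_true_eq]
      simp only [List.get_eq_getElem] at this
      exact fun h => absurd this (not_le_of_gt h)
    calc (l.filter (fun a => b a ∈ Finset.Iio i)).length
        = ((l.take j ++ l.drop j).filter (fun a => b a ∈ Finset.Iio i)).length := by
          rw [List.take_append_drop]
      _ = ((l.take j).filter (fun a => b a ∈ Finset.Iio i)).length := by
          rw [List.filter_append, hdrop, List.append_nil]
      _ ≤ (l.take j).length := List.length_filter_le _ _
      _ ≤ j := by simp
  -- count of elements with bucket ≤ i
  have hle : j + 1 ≤ (l.filter (fun a => b a ∈ Finset.Iic i)).length := by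
    have htake : (l.take (j+1)).filter (fun a => b a ∈ Finset.Iic i) = l.take (j+1) := by
      rw [List.filter_eq_self]
      intro a ha
      rw [List.mem_iff_getElem] at ha
      obtain ⟨p, hp, rfl⟩ := ha
      have hp2 : p < l.length := by
        have := hp; rw [List.length_take] at this; omega
      have hpj : p ≤ j := by
        have := hp; rw [List.length_take] at this; omega
      rw [List.getElem_take]
      have := hsorted p j hp2 hj hpj
      rw [hbi] at this
      simp only [List.get_eq_getElem] at this
      simpa using this
    calc j + 1 = (l.take (j+1)).length := by rw [List.length_take]; omega
      _ = ((l.take (j+1)).filter (fun a => b a ∈ Finset.Iic i)).length := by rw [htake]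
      _ ≤ ((l.take (j+1)).filter _).length + ((l.drop (j+1)).filter (fun a => b a ∈ Finset.Iic i)).length := Nat.le_add_right _ _
      _ = (((l.take (j+1)) ++ (l.drop (j+1))).filter (fun a => b a ∈ Finset.Iic i)).length := by
          rw [List.filter_append, List.length_append]
      _ = (l.filter (fun a => b a ∈ Finset.Iic i)).length := by rw [List.take_append_drop]
  rw [filter_bucket_sum] at hlt hle
  have hsumlt : (∑ k ∈ Finset.Iio i, n k : ℤ) ≤ (j : ℤ) := by
    have : (∑ k ∈ Finset.Iio i, n k) ≤ j := by
      calc ∑ k ∈ Finset.Iio i, n k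
          = ∑ k ∈ Finset.Iio i, (l.filter (fun a => b a = k)).length :=
            Finset.sum_congr rfl (fun k _ => hn k)
        _ ≤ j := hlt
    exact_mod_cast this
  have hsumle : (j : ℤ) + 1 ≤ ∑ k ∈ Finset.Iic i, (n k : ℤ) := by
    have : j + 1 ≤ ∑ k ∈ Finset.Iic i, n k := by
      calc j + 1 ≤ ∑ k ∈ Finset.Iic i, (l.filter (fun a => b a = k)).length := hle
        _ = ∑ k ∈ Finset.Iic i, n k := Finset.sum_congr rfl (fun k _ => (hn k).symm)
    exact_mod_cast this
  constructor
  · rw [hlo]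
    calc ∑ k ∈ Finset.Iio i, max 0 (cm k)
        ≤ ∑ k ∈ Finset.Iio i, (n k : ℤ) := by
          apply Finset.sum_le_sum
          intro k _
          exact max_le (by positivity) (hbound k).1
      _ ≤ (j : ℤ) := by
          rw [← Nat.cast_sum] at hsumlt; exact_mod_cast hsumlt
  · rw [hhi]
    apply lt_min
    · exact_mod_cast hj
    · calc (j : ℤ) < (j : ℤ) + 1 := by omega
        _ ≤ ∑ k ∈ Finset.Iic i, (n k : ℤ) := hsumle
        _ ≤ ∑ k ∈ Finset.Iic i, cp k :=
            Finset.sum_le_sum (fun k _ => (hbound k).2)
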